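/- arXiv:math-ph/0101013 — 3 statements merged into one kernel-verified Lean document; each statement's English description precedes it below -/
import Mathlib

section
/- Let 0 < q < 1, let A(ω) = a₁ω + a₀, B(ω) = b₂ω² + b₁ω + b₀ be real polynomials, let a ≤ 0 ≤ b, and let ϱ : ℝ → ℝ be continuous at 0, satisfy the q-Pearson equation and the boundary conditions ϱ(a)B(a) = ϱ(b)B(b) = 0, and assume the linear functional p ↦ ∫_a^b p(ω)ϱ(ω) d_qω is positive definite on real polynomials (so a monic orthogonal polynomial system exists and is unique). Let (P̃_n)_{n≥0} be the monic orthogonal polynomial system for ϱ(ω)d_qω on [a,b]. Then each P̃_n satisfies the Hahn q-difference equation A(ω)·(∂_q P̃_n)(ω) + B(ω)·(∂_q(Q^{−1}(∂_q P̃_n)))(ω) = λ_n·P̃_n(ω) for all ω ≠ 0, where (Q^{−1}g)(ω) := g(q^{−1}ω) and λ_n = a₁[n] + b₂[n][n−1]q^{−(n−1)}, with [m] = (1−q^m)/(1−q). -/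
/-- The q-derivative of a function: `(∂_q f)(ω) = (f(ω) − f(qω))/((1−q)ω)` (junk at `ω = 0`). -/
noncomputable def qD (q : ℝ) (f : ℝ → ℝ) (ω : ℝ) : ℝ :=
  (f ω - f (q * ω)) / ((1 - q) * ω)

/-- The q-derivative of a real polynomial: `a·Xⁿ ↦ a·[n]·Xⁿ⁻¹` where `[n] = 1 + q + ⋯ + qⁿ⁻¹`,
so that for `ω ≠ 0` its value at `ω` is `(p(ω) − p(qω))/((1−q)ω)`. -/
noncomputable def qDerivP (q : ℝ) (p : Polynomial ℝ) : Polynomial ℝ :=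
  p.sum fun n a => Polynomial.C (a * ∑ i ∈ Finset.range n, q ^ i) * Polynomial.X ^ (n - 1)

/-- The Jackson integral `∫_a^b f(ω) d_qω = (1−q)·∑_{k=0}^∞ qᵏ(b·f(qᵏb) − a·f(qᵏa))`. -/
noncomputable def jackson (q a b : ℝ) (f : ℝ → ℝ) : ℝ :=
  (1 - q) * ∑' k : ℕ, q ^ k * (b * f (q ^ k * b) - a * f (q ^ k * a))

/-- Absolute convergence of the Jackson integral of `f` on `[a,b]`. -/
def JacksonSummable (q a b : ℝ) (f : ℝ → ℝ) : Prop :=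
  Summable fun k : ℕ => |q ^ k * (b * f (q ^ k * b) - a * f (q ^ k * a))|


open Finset


noncomputable def dilP (q : ℝ) (p : Polynomial ℝ) : Polynomial ℝ :=
  p.sum fun n a => Polynomial.C (a * q⁻¹ ^ n) * Polynomial.X ^ n

theorem coeff_qDerivP (q : ℝ) (p : Polynomial ℝ) (k : ℕ) :
    (qDerivP q p).coeff k = p.coeff (k+1) * ∑ i ∈ Finset.range (k+1), q ^ i := by
  unfold qDerivP Polynomial.sum
  rw [Polynomial.finset_sum_coeff]
  rw [Finset.sum_eq_single (k+1)]
  · rw [Polynomial.coeff_C_mul, Polynomial.coeff_X_pow]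
    simp
  · intro n hn hne
    rw [Polynomial.coeff_C_mul, Polynomial.coeff_X_pow]
    rcases Nat.eq_zero_or_pos n with h0 | h1
    · subst h0; simp
    · have : k ≠ n - 1 := fun h => hne (by omega)
      simp [this]
  · intro h
    rw [Polynomial.coeff_C_mul, Polynomial.coeff_X_pow]
    simp [Polynomial.notMem_support_iff.mp h]

theorem coeff_dilP (q : ℝ) (p : Polynomial ℝ) (k : ℕ) :
    (dilP q p).coeff k = p.coeff k * q⁻¹ ^ k := by
  unfold dilP Polynomial.sum
  rw [Polynomial.finset_sum_coeff]
  rw [Finset.sum_eq_single k]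
  · rw [Polynomial.coeff_C_mul, Polynomial.coeff_X_pow]; simp
  · intro n hn hne
    rw [Polynomial.coeff_C_mul, Polynomial.coeff_X_pow]
    simp [Ne.symm hne]
  · intro h
    rw [Polynomial.coeff_C_mul, Polynomial.coeff_X_pow]
    simp [Polynomial.notMem_support_iff.mp h]
open Polynomial Finset

theorem geom_fac (q : ℝ) (n : ℕ) : (1-q) * ∑ i ∈ Finset.range n, q ^ i = 1 - q^n := by
  linear_combination (-1 : ℝ) * geom_sum_mul q n

theorem eval_dilP (q : ℝ) (p : Polynomial ℝ) (x : ℝ) :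
    (dilP q p).eval x = p.eval (q⁻¹ * x) := by
  unfold dilP
  rw [Polynomial.sum, Polynomial.eval_finset_sum, Polynomial.eval_eq_sum, Polynomial.sum]
  refine Finset.sum_congr rfl fun n _ => ?_
  simp only [Polynomial.eval_mul, Polynomial.eval_C, Polynomial.eval_pow, Polynomial.eval_X,
    mul_pow]
  ring

theorem eval_qDerivP_mul (q : ℝ) (p : Polynomial ℝ) (ω : ℝ) :
    (1-q) * ω * (qDerivP q p).eval ω = p.eval ω - p.eval (q*ω) := by
  unfold qDerivP
  rw [Polynomial.sum, Polynomial.eval_finset_sum]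
  rw [Polynomial.eval_eq_sum, Polynomial.eval_eq_sum, Polynomial.sum, Polynomial.sum,
    ← Finset.sum_sub_distrib, Finset.mul_sum]
  refine Finset.sum_congr rfl fun n _ => ?_
  simp only [Polynomial.eval_mul, Polynomial.eval_C, Polynomial.eval_pow, Polynomial.eval_X]
  rcases Nat.eq_zero_or_pos n with h0|h1
  · subst h0; simp
  · have e1 : ω ^ n = ω^(n-1) * ω := by
      conv_lhs => rw [show n = (n-1)+1 by omega, pow_succ]
    have e2 : (q*ω) ^ n = q^n * (ω^(n-1) * ω) := by rw [mul_pow, ← e1]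
    have e3 := geom_fac q n
    set s := ∑ i ∈ Finset.range n, q ^ i
    linear_combination (p.coeff n * ω^(n-1) * ω) * e3 - p.coeff n * e1 + p.coeff n * e2
theorem eval_qDerivP (q : ℝ) (hq : q ≠ 1) (p : Polynomial ℝ) (ω : ℝ) (hω : ω ≠ 0) :
    (qDerivP q p).eval ω = (p.eval ω - p.eval (q*ω)) / ((1-q) * ω) := by
  rw [← eval_qDerivP_mul]
  have h1 : (1-q) ≠ 0 := sub_ne_zero.mpr (Ne.symm hq)
  field_simp

theorem natDegree_qDerivP_le (q : ℝ) (p : Polynomial ℝ) (m : ℕ) (h : p.natDegree ≤ m + 1) :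
    (qDerivP q p).natDegree ≤ m := by
  apply Polynomial.natDegree_le_iff_coeff_eq_zero.mpr
  intro k hk
  rw [coeff_qDerivP, Polynomial.coeff_eq_zero_of_natDegree_lt (by omega)]
  ring

theorem natDegree_dilP_le (q : ℝ) (p : Polynomial ℝ) :
    (dilP q p).natDegree ≤ p.natDegree := by
  apply Polynomial.natDegree_le_iff_coeff_eq_zero.mpr
  intro k hk
  rw [coeff_dilP, Polynomial.coeff_eq_zero_of_natDegree_lt (by omega)]
  ring

theorem qDerivP_const (q : ℝ) (p : Polynomial ℝ) (h : p.natDegree = 0) :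
    qDerivP q p = 0 := by
  apply Polynomial.ext
  intro k
  rw [coeff_qDerivP, Polynomial.coeff_eq_zero_of_natDegree_lt (by omega)]
  simp

theorem coeff_Lq (q a₀ a₁ b₀ b₁ b₂ : ℝ) (p : Polynomial ℝ) (k : ℕ) (hk : 1 ≤ k) :
    ((Polynomial.C a₁ * Polynomial.X + Polynomial.C a₀) * qDerivP q p
      + (Polynomial.C b₂ * Polynomial.X^2 + Polynomial.C b₁ * Polynomial.X + Polynomial.C b₀)
        * qDerivP q (dilP q (qDerivP q p))).coeff k
    = a₁ * (p.coeff k * ∑ i ∈ range k, q ^ i)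
      + a₀ * (p.coeff (k+1) * ∑ i ∈ range (k+1), q ^ i)
      + (if 2 ≤ k then
          b₂ * (p.coeff k * (∑ i ∈ range k, q ^ i) * q⁻¹ ^ (k-1) * ∑ i ∈ range (k-1), q ^ i)
        else 0)
      + b₁ * (p.coeff (k+1) * (∑ i ∈ range (k+1), q ^ i) * q⁻¹ ^ k * ∑ i ∈ range k, q ^ i)
      + b₀ * (p.coeff (k+2) * (∑ i ∈ range (k+2), q ^ i) * q⁻¹ ^ (k+1)
          * ∑ i ∈ range (k+1), q ^ i) := by
  set r := qDerivP q p with hr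
  set T := qDerivP q (dilP q r) with hTdef
  have hrc : ∀ j, r.coeff j = p.coeff (j+1) * ∑ i ∈ range (j+1), q ^ i := fun j =>
    coeff_qDerivP q p j
  have hT : ∀ j, T.coeff j = p.coeff (j+2) * (∑ i ∈ range (j+2), q^i) * q⁻¹^(j+1)
      * (∑ i ∈ range (j+1), q^i) := by
    intro j
    rw [hTdef, coeff_qDerivP, coeff_dilP, hrc]
  have e : (Polynomial.C a₁ * Polynomial.X + Polynomial.C a₀) * r
      + (Polynomial.C b₂ * Polynomial.X^2 + Polynomial.C b₁ * Polynomial.X + Polynomial.C b₀) * T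
      = Polynomial.C a₀ * r + Polynomial.C b₀ * T
        + (Polynomial.C a₁ * r + Polynomial.C b₁ * T) * Polynomial.X^1
        + (Polynomial.C b₂ * T) * Polynomial.X^2 := by ring
  rw [e, Polynomial.coeff_add, Polynomial.coeff_add, Polynomial.coeff_add,
    Polynomial.coeff_mul_X_pow', Polynomial.coeff_mul_X_pow',
    Polynomial.coeff_C_mul, Polynomial.coeff_C_mul, if_pos hk,
    Polynomial.coeff_add, Polynomial.coeff_C_mul, Polynomial.coeff_C_mul,
    Polynomial.coeff_C_mul]
  simp only [hrc, hT]
  by_cases h2 : 2 ≤ k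
  · rw [if_pos h2, if_pos h2]
    rw [show k - 1 + 1 = k from by omega, show k - 1 + 2 = k + 1 from by omega,
      show k - 2 + 2 = k from by omega, show k - 2 + 1 = k - 1 from by omega]
    ring
  · rw [if_neg h2, if_neg h2]
    rw [show k - 1 + 1 = k from by omega, show k - 1 + 2 = k + 1 from by omega]
    ring
theorem natDegree_Lq_le (q a₀ a₁ b₀ b₁ b₂ : ℝ) (p : Polynomial ℝ) :
    ((Polynomial.C a₁ * Polynomial.X + Polynomial.C a₀) * qDerivP q p
      + (Polynomial.C b₂ * Polynomial.X^2 + Polynomial.C b₁ * Polynomial.X + Polynomial.C b₀)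
        * qDerivP q (dilP q (qDerivP q p))).natDegree ≤ p.natDegree := by
  apply Polynomial.natDegree_le_iff_coeff_eq_zero.mpr
  intro k hk
  rw [coeff_Lq _ _ _ _ _ _ _ _ (by omega)]
  rw [Polynomial.coeff_eq_zero_of_natDegree_lt (by omega),
    Polynomial.coeff_eq_zero_of_natDegree_lt (show p.natDegree < k+1 by omega),
    Polynomial.coeff_eq_zero_of_natDegree_lt (show p.natDegree < k+2 by omega)]
  by_cases h2 : 2 ≤ k
  · rw [if_pos h2]; ring
  · rw [if_neg h2]; ring

theorem coeff_Lq_top (q a₀ a₁ b₀ b₁ b₂ : ℝ) (p : Polynomial ℝ) (n : ℕ) (hn : 1 ≤ n)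
    (hd : p.natDegree ≤ n) :
    ((Polynomial.C a₁ * Polynomial.X + Polynomial.C a₀) * qDerivP q p
      + (Polynomial.C b₂ * Polynomial.X^2 + Polynomial.C b₁ * Polynomial.X + Polynomial.C b₀)
        * qDerivP q (dilP q (qDerivP q p))).coeff n
    = (a₁ * (∑ i ∈ range n, q ^ i)
        + b₂ * (∑ i ∈ range n, q ^ i) * (∑ i ∈ range (n-1), q ^ i) * q⁻¹ ^ (n-1))
      * p.coeff n := by
  rw [coeff_Lq _ _ _ _ _ _ _ _ hn,
    Polynomial.coeff_eq_zero_of_natDegree_lt (show p.natDegree < n+1 by omega),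
    Polynomial.coeff_eq_zero_of_natDegree_lt (show p.natDegree < n+2 by omega)]
  by_cases h2 : 2 ≤ n
  · rw [if_pos h2]; ring
  · rw [if_neg h2]
    have : n = 1 := by omega
    subst this
    simp

theorem gen_vanish (P : ℕ → Polynomial ℝ) (hmonic : ∀ n, (P n).Monic)
    (hdeg : ∀ n, (P n).natDegree = n)
    (φ : Polynomial ℝ → ℝ) (hadd : ∀ p r, φ (p + r) = φ p + φ r)
    (hsmul : ∀ c p, φ (Polynomial.C c * p) = c * φ p) :
    ∀ d : ℕ, ∀ r : Polynomial ℝ, r.natDegree ≤ d → (∀ m, m ≤ d → φ (P m) = 0) → φ r = 0 := by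
  intro d
  induction d with
  | zero =>
    intro r hr hm
    have h0 : P 0 = 1 := by
      have h1 := (hmonic 0).coeff_natDegree
      rw [hdeg 0] at h1
      rw [Polynomial.eq_C_of_natDegree_le_zero (le_of_eq (hdeg 0)), h1, map_one]
    have : r = Polynomial.C (r.coeff 0) * P 0 := by
      rw [h0, mul_one]
      exact Polynomial.eq_C_of_natDegree_le_zero hr
    rw [this, hsmul, hm 0 le_rfl, mul_zero]
  | succ d ih =>
    intro r hr hm
    by_cases hcase : r.natDegree ≤ d
    · exact ih r hcase (fun m hmle => hm m (by omega))
    · set c := r.coeff (d+1) with hc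
      have hP1 : (P (d+1)).coeff (d+1) = 1 := by
        have h1 := (hmonic (d+1)).coeff_natDegree
        rwa [hdeg (d+1)] at h1
      have hdeg' : (r - Polynomial.C c * P (d+1)).natDegree ≤ d := by
        apply Polynomial.natDegree_le_iff_coeff_eq_zero.mpr
        intro k hk
        rw [Polynomial.coeff_sub, Polynomial.coeff_C_mul]
        by_cases hkd : k = d+1
        · subst hkd; rw [hP1, ← hc]; ring
        · rw [Polynomial.coeff_eq_zero_of_natDegree_lt (show r.natDegree < k by omega),
            Polynomial.coeff_eq_zero_of_natDegree_lt (by rw [hdeg]; omega)]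
          ring
      have hsplit : r = (r - Polynomial.C c * P (d+1)) + Polynomial.C c * P (d+1) := by ring
      rw [hsplit, hadd, hsmul, hm (d+1) le_rfl,
        ih _ hdeg' (fun m hmle => hm m (by omega))]
      ring

theorem tsum_telescope_zero (u : ℕ → ℝ) (v : ℕ → ℝ)
    (h : ∀ k, v k = u k - u (k+1)) (hsum : Summable v)
    (h0 : u 0 = 0) (hlim : Filter.Tendsto u Filter.atTop (nhds 0)) :
    ∑' k, v k = 0 := by
  have ht := hsum.hasSum.tendsto_sum_nat
  have hps : ∀ n, ∑ k ∈ range n, v k = u 0 - u n := by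
    intro n
    rw [Finset.sum_congr rfl fun k _ => h k]
    exact Finset.sum_range_sub' u n
  have ht2 : Filter.Tendsto (fun n => ∑ k ∈ range n, v k) Filter.atTop (nhds (u 0 - 0)) := by
    simp only [hps]
    exact Filter.Tendsto.sub tendsto_const_nhds hlim
  have := tendsto_nhds_unique ht ht2
  rw [h0] at this
  simpa using this

/-- Under Pearson data `(A, B)` on `[a,b]` with weight `ϱ` (continuous at
`0`, q-Pearson equation, boundary conditions) whose moment functional
`p ↦ ∫_a^b p ϱ d_qω` is positive definite, the monic orthogonal polynomial system
`(P̃_n)` satisfies the Hahn q-difference equation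
`A(ω)(∂_q P̃_n)(ω) + B(ω)(∂_q(Q^{−1}(∂_q P̃_n)))(ω) = λ_n P̃_n(ω)` for `ω ≠ 0`, where
`(Q^{−1}g)(ω) = g(q^{−1}ω)` and `λ_n = a₁[n] + b₂[n][n−1]q^{−(n−1)}`,
`[m] = (1−q^m)/(1−q)`. -/
theorem stmt_4 (q a₀ a₁ b₀ b₁ b₂ a b : ℝ) (hq0 : 0 < q) (hq1 : q < 1)
    (hab : a ≤ 0 ∧ 0 ≤ b)
    (A B : Polynomial ℝ)
    (hA : A = Polynomial.C a₁ * Polynomial.X + Polynomial.C a₀)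
    (hB : B = Polynomial.C b₂ * Polynomial.X ^ 2 + Polynomial.C b₁ * Polynomial.X
      + Polynomial.C b₀)
    (ϱ : ℝ → ℝ) (hcont : ContinuousAt ϱ 0)
    (hPearson : ∀ ω : ℝ, ω ≠ 0 →
      qD q (fun x => ϱ x * B.eval x) ω = ϱ ω * A.eval ω)
    (hbdry : ϱ a * B.eval a = 0 ∧ ϱ b * B.eval b = 0)
    (hsum : ∀ p : Polynomial ℝ, JacksonSummable q a b (fun ω => p.eval ω * ϱ ω))
    (hposdef : ∀ p : Polynomial ℝ, p ≠ 0 →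
      0 < jackson q a b (fun ω => (p.eval ω) ^ 2 * ϱ ω))
    (P : ℕ → Polynomial ℝ)
    (hmonic : ∀ n : ℕ, (P n).Monic)
    (hdeg : ∀ n : ℕ, (P n).natDegree = n)
    (horth : ∀ n m : ℕ, n ≠ m →
      jackson q a b (fun ω => (P n).eval ω * (P m).eval ω * ϱ ω) = 0) :
    ∀ n : ℕ, ∀ ω : ℝ, ω ≠ 0 →
      A.eval ω * (qDerivP q (P n)).eval ω
        + B.eval ω * qD q (fun x => (qDerivP q (P n)).eval (q⁻¹ * x)) ω
      = (a₁ * ((1 - q ^ n) / (1 - q))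
          + b₂ * ((1 - q ^ n) / (1 - q)) * ((1 - q ^ (n - 1)) / (1 - q)) * q⁻¹ ^ (n - 1))
        * (P n).eval ω := by
  obtain ⟨hbdrya, hbdryb⟩ := hbdry
  have hq : q ≠ 1 := ne_of_lt hq1
  have hqne : q ≠ 0 := ne_of_gt hq0
  have h1q : (1:ℝ) - q ≠ 0 := sub_ne_zero.mpr (Ne.symm hq)
  -- the series and the moment functional
  set Ser : Polynomial ℝ → ℕ → ℝ := fun p k =>
    q ^ k * (b * (p.eval (q ^ k * b) * ϱ (q ^ k * b))
      - a * (p.eval (q ^ k * a) * ϱ (q ^ k * a))) with hSer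
  set J : Polynomial ℝ → ℝ := fun p => (1 - q) * ∑' k, Ser p k with hJ
  have hJack : ∀ p : Polynomial ℝ, jackson q a b (fun ω => p.eval ω * ϱ ω) = J p :=
    fun p => rfl
  have hSsum : ∀ p : Polynomial ℝ, Summable (Ser p) := fun p => (hsum p).of_abs
  have Jadd : ∀ p r : Polynomial ℝ, J (p + r) = J p + J r := by
    intro p r
    have h : ∀ k, Ser (p + r) k = Ser p k + Ser r k := by
      intro k
      simp only [hSer, Polynomial.eval_add]
      ring
    simp only [hJ]
    rw [tsum_congr h, Summable.tsum_add (hSsum p) (hSsum r)]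
    ring
  have Jsmul : ∀ (c : ℝ) (p : Polynomial ℝ), J (Polynomial.C c * p) = c * J p := by
    intro c p
    have h : ∀ k, Ser (Polynomial.C c * p) k = c * Ser p k := by
      intro k
      simp only [hSer, Polynomial.eval_mul, Polynomial.eval_C]
      ring
    simp only [hJ]
    rw [tsum_congr h, tsum_mul_left]
    ring
  have horthJ : ∀ n m : ℕ, n ≠ m → J (P n * P m) = 0 := by
    intro n m h
    rw [← hJack]
    rw [show (fun ω => (P n * P m).eval ω * ϱ ω)
        = fun ω => (P n).eval ω * (P m).eval ω * ϱ ω from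
      funext fun x => by rw [Polynomial.eval_mul]]
    exact horth n m h
  have hposJ : ∀ p : Polynomial ℝ, p ≠ 0 → 0 < J (p * p) := by
    intro p hp
    rw [← hJack]
    rw [show (fun ω => (p * p).eval ω * ϱ ω) = fun ω => p.eval ω ^ 2 * ϱ ω from
      funext fun x => by rw [Polynomial.eval_mul, sq]]
    exact hposdef p hp
  -- the q-difference operator
  set Lq : Polynomial ℝ → Polynomial ℝ := fun p =>
    A * qDerivP q p + B * qDerivP q (dilP q (qDerivP q p)) with hLq
  -- symmetry of Lq w.r.t. J
  have symmJ : ∀ p r : Polynomial ℝ, J (Lq p * r) = J (p * Lq r) := by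
    intro p r
    set H : ℝ → ℝ := fun y =>
      r.eval y * (ϱ y * B.eval y * (dilP q (qDerivP q p)).eval y)
      - p.eval y * (ϱ y * B.eval y * (dilP q (qDerivP q r)).eval y) with hH
    have core : ∀ (s : Polynomial ℝ) (x : ℝ), x ≠ 0 →
        (1-q) * x * ((Lq s).eval x * ϱ x)
        = ϱ x * B.eval x * (dilP q (qDerivP q s)).eval x
          - ϱ (q*x) * B.eval (q*x) * (dilP q (qDerivP q s)).eval (q*x) := by
      intro s x hx
      have pear : ϱ x * B.eval x - ϱ (q*x) * B.eval (q*x) = (1-q)*x*(ϱ x * A.eval x) := by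
        have hP := hPearson x hx
        unfold qD at hP
        rw [div_eq_iff (mul_ne_zero h1q hx)] at hP
        linear_combination hP
      have hdd := eval_qDerivP_mul q (dilP q (qDerivP q s)) x
      have hw' : (dilP q (qDerivP q s)).eval (q*x) = (qDerivP q s).eval x := by
        rw [eval_dilP]
        congr 1
        field_simp
      simp only [hLq, Polynomial.eval_add, Polynomial.eval_mul]
      linear_combination (ϱ x * B.eval x) * hdd
        + (ϱ (q*x) * B.eval (q*x) - ϱ x * B.eval x) * hw'
        - (qDerivP q s).eval x * pear
    have key : ∀ x : ℝ, (1-q) * (x * ((Lq p * r).eval x * ϱ x - (p * Lq r).eval x * ϱ x))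
        = H x - H (q*x) := by
      intro x
      by_cases hx : x = 0
      · subst hx
        simp [hH]
      · have e1 := core p x hx
        have e2 := core r x hx
        have hp1 := eval_qDerivP_mul q p x
        have hr1 := eval_qDerivP_mul q r x
        have hwp : (dilP q (qDerivP q p)).eval (q*x) = (qDerivP q p).eval x := by
          rw [eval_dilP]; congr 1; field_simp
        have hwr : (dilP q (qDerivP q r)).eval (q*x) = (qDerivP q r).eval x := by
          rw [eval_dilP]; congr 1; field_simp
        simp only [hH, Polynomial.eval_mul]
        linear_combination r.eval x * e1 - p.eval x * e2
          + (ϱ (q*x) * B.eval (q*x) * (r.eval (q*x) - r.eval x)) * hwp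
          - (ϱ (q*x) * B.eval (q*x) * (p.eval (q*x) - p.eval x)) * hwr
          + (ϱ (q*x) * B.eval (q*x) * (qDerivP q p).eval x) * hr1
          - (ϱ (q*x) * B.eval (q*x) * (qDerivP q r).eval x) * hp1
    have hs1 : Summable (Ser (Lq p * r)) := hSsum _
    have hs2 : Summable (Ser (p * Lq r)) := hSsum _
    set u : ℕ → ℝ := fun k => (H (q^k * b) - H (q^k * a)) / (1-q) with hu
    have hterm' : ∀ k, (1-q) * (Ser (Lq p * r) k - Ser (p * Lq r) k)
        = (H (q^k*b) - H (q^k*a)) - (H (q^(k+1)*b) - H (q^(k+1)*a)) := by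
      intro k
      have kb := key (q^k * b)
      have ka := key (q^k * a)
      rw [show q * (q^k*b) = q^(k+1)*b from by ring] at kb
      rw [show q * (q^k*a) = q^(k+1)*a from by ring] at ka
      simp only [hSer]
      linear_combination kb - ka
    have hterm : ∀ k, Ser (Lq p * r) k - Ser (p * Lq r) k = u k - u (k+1) := by
      intro k
      simp only [hu]
      rw [div_sub_div_same, eq_div_iff h1q]
      linear_combination hterm' k
    have hu0 : u 0 = 0 := by
      simp only [hu, pow_zero, one_mul]
      simp only [hH]
      rw [hbdryb, hbdrya]
      simp
    have hHc : ContinuousAt H 0 := by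
      apply ContinuousAt.sub
      · exact (r.continuous_aeval.continuousAt).mul
          ((hcont.mul (B.continuous_aeval.continuousAt)).mul
            ((dilP q (qDerivP q p)).continuous_aeval.continuousAt))
      · exact (p.continuous_aeval.continuousAt).mul
          ((hcont.mul (B.continuous_aeval.continuousAt)).mul
            ((dilP q (qDerivP q r)).continuous_aeval.continuousAt))
    have hq0k : Filter.Tendsto (fun k : ℕ => q ^ k) Filter.atTop (nhds 0) :=
      tendsto_pow_atTop_nhds_zero_of_lt_one hq0.le hq1
    have htb : Filter.Tendsto (fun k : ℕ => H (q ^ k * b)) Filter.atTop (nhds (H 0)) := by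
      apply hHc.tendsto.comp
      have := hq0k.mul_const b
      simpa using this
    have hta : Filter.Tendsto (fun k : ℕ => H (q ^ k * a)) Filter.atTop (nhds (H 0)) := by
      apply hHc.tendsto.comp
      have := hq0k.mul_const a
      simpa using this
    have hulim : Filter.Tendsto u Filter.atTop (nhds 0) := by
      have := (htb.sub hta).div_const (1-q)
      simpa using this
    have htele : ∑' k, (Ser (Lq p * r) k - Ser (p * Lq r) k) = 0 :=
      tsum_telescope_zero u _ hterm (hs1.sub hs2) hu0 hulim
    rw [Summable.tsum_sub hs1 hs2] at htele
    simp only [hJ]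
    linear_combination (1-q) * htele
  -- Lq is the abstract operator with the coefficient lemmas
  have hLqA : ∀ p : Polynomial ℝ, Lq p
      = (Polynomial.C a₁ * Polynomial.X + Polynomial.C a₀) * qDerivP q p
        + (Polynomial.C b₂ * Polynomial.X^2 + Polynomial.C b₁ * Polynomial.X + Polynomial.C b₀)
          * qDerivP q (dilP q (qDerivP q p)) := by
    intro p
    rw [hLq, hA, hB]
  have hLdeg : ∀ p : Polynomial ℝ, (Lq p).natDegree ≤ p.natDegree := by
    intro p
    rw [hLqA]
    exact natDegree_Lq_le q a₀ a₁ b₀ b₁ b₂ p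
  -- vanishing against lower degree polynomials
  have lowdeg : ∀ (n : ℕ) (r : Polynomial ℝ), r.natDegree < n → J (P n * r) = 0 := by
    intro n r hr
    refine gen_vanish P hmonic hdeg (fun s => J (P n * s)) ?_ ?_ (n-1) r (by omega) ?_
    · intro s t
      show J (P n * (s + t)) = J (P n * s) + J (P n * t)
      rw [mul_add, Jadd]
    · intro c s
      show J (P n * (Polynomial.C c * s)) = c * J (P n * s)
      rw [show P n * (Polynomial.C c * s) = Polynomial.C c * (P n * s) from by ring, Jsmul]
    · intro m hm
      exact horthJ n m (by omega)
  -- main step : Lq (P n) = λ_n • P n for n ≥ 1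
  intro n ω hω
  have hωne : (1-q) * ω ≠ 0 := mul_ne_zero h1q hω
  by_cases hn0 : n = 0
  · subst hn0
    have hD0 : qDerivP q (P 0) = 0 := qDerivP_const q (P 0) (hdeg 0)
    rw [hD0]
    simp [qD]
  · -- n ≥ 1
    have hn1 : 1 ≤ n := by omega
    set lam : ℝ := a₁ * (∑ i ∈ range n, q ^ i)
      + b₂ * (∑ i ∈ range n, q ^ i) * (∑ i ∈ range (n-1), q ^ i) * q⁻¹ ^ (n-1) with hlam
    set Rn : Polynomial ℝ := Lq (P n) - Polynomial.C lam * P n with hRn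
    have hcoefftop : (Lq (P n)).coeff n = lam := by
      rw [hLqA]
      rw [coeff_Lq_top q a₀ a₁ b₀ b₁ b₂ (P n) n hn1 (le_of_eq (hdeg n))]
      have h1 := (hmonic n).coeff_natDegree
      rw [hdeg n] at h1
      rw [h1, hlam]
      ring
    have hRdeg : Rn.natDegree < n ∨ Rn = 0 := by
      by_cases h : Rn = 0
      · exact Or.inr h
      · left
        have hle : Rn.natDegree ≤ n := by
          rw [hRn]
          apply le_trans (Polynomial.natDegree_sub_le _ _)
          apply max_le (le_trans (hLdeg (P n)) (le_of_eq (hdeg n)))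
          apply le_trans (Polynomial.natDegree_C_mul_le _ _) (le_of_eq (hdeg n))
        have hcoeffn : Rn.coeff n = 0 := by
          rw [hRn, Polynomial.coeff_sub, Polynomial.coeff_C_mul, hcoefftop]
          have h1 := (hmonic n).coeff_natDegree
          rw [hdeg n] at h1
          rw [h1]
          ring
        rcases lt_or_eq_of_le hle with h' | h'
        · exact h'
        · exfalso
          apply h
          apply Polynomial.leadingCoeff_eq_zero.mp
          rw [Polynomial.leadingCoeff, h', hcoeffn]
    have hRzero : Rn = 0 := by
      by_contra hne
      have hRd : Rn.natDegree < n := hRdeg.resolve_right hne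
      have hRm : ∀ m : ℕ, J (Rn * P m) = 0 := by
        intro m
        by_cases hmn : m < n
        · have hsplit : Rn * P m = Lq (P n) * P m + Polynomial.C (-lam) * (P n * P m) := by
            rw [hRn, map_neg]
            ring
          rw [hsplit, Jadd, Jsmul, symmJ, horthJ n m (by omega)]
          have hLPm : J (P n * Lq (P m)) = 0 := by
            apply lowdeg n (Lq (P m))
            calc (Lq (P m)).natDegree ≤ (P m).natDegree := hLdeg (P m)
            _ = m := hdeg m
            _ < n := hmn
          rw [hLPm]
          ring
        · rw [show Rn * P m = P m * Rn from mul_comm _ _]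
          exact lowdeg m Rn (by omega)
      have hRR : J (Rn * Rn) = 0 := by
        refine gen_vanish P hmonic hdeg (fun s => J (Rn * s)) ?_ ?_ Rn.natDegree Rn le_rfl ?_
        · intro s t
          show J (Rn * (s + t)) = J (Rn * s) + J (Rn * t)
          rw [mul_add, Jadd]
        · intro c s
          show J (Rn * (Polynomial.C c * s)) = c * J (Rn * s)
          rw [show Rn * (Polynomial.C c * s) = Polynomial.C c * (Rn * s) from by ring, Jsmul]
        · intro m _
          exact hRm m
      exact absurd hRR (ne_of_gt (hposJ Rn hne))
    have hLP : Lq (P n) = Polynomial.C lam * P n := by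
      have := sub_eq_zero.mp (hRn ▸ hRzero)
      exact this
    -- evaluate at ω
    have hqd : qD q (fun x => (qDerivP q (P n)).eval (q⁻¹ * x)) ω
        = (qDerivP q (dilP q (qDerivP q (P n)))).eval ω := by
      rw [eval_qDerivP q hq _ ω hω, eval_dilP, eval_dilP]
      unfold qD
      rfl
    have heval : A.eval ω * (qDerivP q (P n)).eval ω
        + B.eval ω * (qDerivP q (dilP q (qDerivP q (P n)))).eval ω
        = lam * (P n).eval ω := by
      have := congrArg (fun p => Polynomial.eval ω p) hLP
      simp only [hLq, Polynomial.eval_add, Polynomial.eval_mul, Polynomial.eval_C] at this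
      exact this
    rw [hqd, heval]
    -- identify lam with the stated eigenvalue
    have hsn : ∀ m : ℕ, (∑ i ∈ range m, q ^ i) = (1 - q ^ m) / (1 - q) := by
      intro m
      rw [eq_div_iff h1q]
      linear_combination geom_fac q m
    rw [hlam, hsn n, hsn (n-1)]
end

section
/- Let 0 < q < 1 and let A(ω) = a₁ω + a₀, B(ω) = b₂ω² + b₁ω + b₀ be complex polynomials with b₀ ≠ 0, b₂ ≠ 0, b₁ − (1−q)a₀ ≠ 0 and b₂ − (1−q)a₁ = 0. Write B(ω) = b₂(ω−a)(ω−b) with roots a, b ≠ 0, and let c = −b₀/(b₁ − (1−q)a₀) ≠ 0 be the root of the linear polynomial B(ω) − (1−q)ω·A(ω) = (b₁ − (1−q)a₀)ω + b₀. Then ϱ(ω) := (qω/a; q)_∞ · (qω/b; q)_∞ / (ω/c; q)_∞, defined where the denominator is nonzero, satisfies ϱ(ω)·(B(ω) − (1−q)ω·A(ω)) = B(qω)·ϱ(qω) at every ω where both ϱ(ω) and ϱ(qω) are defined. -/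
/-- The infinite q-Pochhammer symbol `(x; q)_∞ = ∏_{k=0}^∞ (1 − qᵏx)` over `ℂ`. -/
noncomputable def qPoch (q : ℝ) (x : ℂ) : ℂ :=
  ∏' k : ℕ, (1 - (q : ℂ) ^ k * x)

open Filter Topology

lemma qmult (q : ℝ) (hq0 : 0 < q) (hq1 : q < 1) (y : ℂ) :
    Multipliable (fun n : ℕ => 1 - (q : ℂ) ^ n * y) := by
  by_cases hz : ∃ k, (1 : ℂ) - (q : ℂ) ^ k * y = 0
  · obtain ⟨k, hk⟩ := hz
    refine ⟨0, ?_⟩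
    rw [HasProd]
    refine Tendsto.congr' ?_ tendsto_const_nhds
    filter_upwards [Filter.eventually_ge_atTop {k}] with s hs
    exact (Finset.prod_eq_zero (hs (Finset.mem_singleton_self k)) hk).symm
  · push_neg at hz
    have hsum : Summable fun n : ℕ => Complex.log (1 - (q : ℂ) ^ n * y) := by
      have hqlt : ∀ n : ℕ, ‖(q : ℂ) ^ n * y‖ = q ^ n * ‖y‖ := by
        intro n
        rw [norm_mul, norm_pow, Complex.norm_real, Real.norm_of_nonneg hq0.le]
      have hg : Summable fun n : ℕ => (3/2 : ℝ) * (q ^ n * ‖y‖) := by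
        apply Summable.mul_left
        exact (summable_geometric_of_lt_one hq0.le hq1).mul_right _
      apply Summable.of_norm_bounded_eventually_nat hg
      have hten : Tendsto (fun n : ℕ => q ^ n * ‖y‖) atTop (𝓝 0) := by
        simpa using (tendsto_pow_atTop_nhds_zero_of_lt_one hq0.le hq1).mul_const ‖y‖
      filter_upwards [hten.eventually_le_const (by norm_num : (0:ℝ) < 1/2)] with n hn
      have h2 : ‖-((q : ℂ) ^ n * y)‖ ≤ 1/2 := by rwa [norm_neg, hqlt]
      calc ‖Complex.log (1 - (q : ℂ) ^ n * y)‖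
          = ‖Complex.log (1 + -((q : ℂ) ^ n * y))‖ := by ring_nf
        _ ≤ 3/2 * ‖-((q : ℂ) ^ n * y)‖ := Complex.norm_log_one_add_half_le_self h2
        _ = 3/2 * (q ^ n * ‖y‖) := by rw [norm_neg, hqlt]
    exact Complex.multipliable_of_summable_log hsum

set_option maxHeartbeats 1000000 in
lemma qPoch_rec (q : ℝ) (hq0 : 0 < q) (hq1 : q < 1) (x : ℂ) :
    qPoch q x = (1 - x) * qPoch q ((q : ℂ) * x) := by
  unfold qPoch
  have hm : Multipliable (fun n : ℕ => 1 - (q : ℂ) ^ (n + 1) * x) := by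
    refine (qmult q hq0 hq1 ((q : ℂ) * x)).congr fun n => ?_
    rw [pow_succ]; ring
  rw [tprod_eq_zero_mul' hm]
  rw [pow_zero, one_mul]
  congr 1
  apply tprod_congr
  intro n; ring

/-- Let `0 < q < 1` and `A(ω) = a₁ω + a₀`, `B(ω) = b₂ω² + b₁ω + b₀` be
complex polynomials with `b₀ ≠ 0`, `b₂ ≠ 0`, `b₁ − (1−q)a₀ ≠ 0` and `b₂ − (1−q)a₁ = 0`.
Write `B(ω) = b₂(ω−a)(ω−b)` with roots `a, b ≠ 0`, and let `c = −b₀/(b₁ − (1−q)a₀) ≠ 0`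
be the root of the linear polynomial `B(ω) − (1−q)ωA(ω) = (b₁ − (1−q)a₀)ω + b₀`.  Then
`ϱ(ω) = (qω/a;q)_∞(qω/b;q)_∞ / (ω/c;q)_∞` satisfies
`ϱ(ω)(B(ω) − (1−q)ωA(ω)) = B(qω)ϱ(qω)` wherever both `ϱ(ω)` and `ϱ(qω)` are defined. -/
theorem stmt_7 (q : ℝ) (hq0 : 0 < q) (hq1 : q < 1)
    (a₀ a₁ b₀ b₁ b₂ a b c : ℂ)
    (A B : ℂ → ℂ)
    (hA : ∀ ω : ℂ, A ω = a₁ * ω + a₀)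
    (hB : ∀ ω : ℂ, B ω = b₂ * ω ^ 2 + b₁ * ω + b₀)
    (hb₀ : b₀ ≠ 0) (hb₂ : b₂ ≠ 0)
    (hlin : b₁ - (1 - (q : ℂ)) * a₀ ≠ 0) (hlead : b₂ - (1 - (q : ℂ)) * a₁ = 0)
    (ha : a ≠ 0) (hb : b ≠ 0) (hc : c ≠ 0)
    (hBroots : ∀ ω : ℂ, B ω = b₂ * (ω - a) * (ω - b))
    (hcdef : c = -b₀ / (b₁ - (1 - (q : ℂ)) * a₀))
    (hCroot : ∀ ω : ℂ, B ω - (1 - (q : ℂ)) * ω * A ω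
      = (b₁ - (1 - (q : ℂ)) * a₀) * ω + b₀)
    (ϱ : ℂ → ℂ)
    (hϱ : ∀ ω : ℂ, ϱ ω =
      qPoch q ((q : ℂ) * ω / a) * qPoch q ((q : ℂ) * ω / b) / qPoch q (ω / c)) :
    ∀ ω : ℂ, qPoch q (ω / c) ≠ 0 → qPoch q ((q : ℂ) * ω / c) ≠ 0 →
      ϱ ω * (B ω - (1 - (q : ℂ)) * ω * A ω) = B ((q : ℂ) * ω) * ϱ ((q : ℂ) * ω) := by
  intro ω h1 h2
  have hba : b₀ = b₂ * a * b := by linear_combination hBroots 0 - hB 0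
  have hLc : (b₁ - (1 - (q : ℂ)) * a₀) * c = -b₀ := by
    rw [hcdef]; field_simp [hb₀]
  have e1 : qPoch q ((q : ℂ) * ω / a)
      = (1 - (q : ℂ) * ω / a) * qPoch q ((q : ℂ) * ((q : ℂ) * ω) / a) := by
    have h := qPoch_rec q hq0 hq1 ((q : ℂ) * ω / a)
    rwa [show (q : ℂ) * ((q : ℂ) * ω / a) = (q : ℂ) * ((q : ℂ) * ω) / a from by ring] at h
  have e2 : qPoch q ((q : ℂ) * ω / b)
      = (1 - (q : ℂ) * ω / b) * qPoch q ((q : ℂ) * ((q : ℂ) * ω) / b) := by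
    have h := qPoch_rec q hq0 hq1 ((q : ℂ) * ω / b)
    rwa [show (q : ℂ) * ((q : ℂ) * ω / b) = (q : ℂ) * ((q : ℂ) * ω) / b from by ring] at h
  have e3 : qPoch q (ω / c) = (1 - ω / c) * qPoch q ((q : ℂ) * ω / c) := by
    have h := qPoch_rec q hq0 hq1 (ω / c)
    rwa [show (q : ℂ) * (ω / c) = (q : ℂ) * ω / c from by ring] at h
  have hne1 : (1 : ℂ) - ω / c ≠ 0 := by
    intro h; apply h1; rw [e3, h, zero_mul]
  have k1 : (b₁ - (1 - (q : ℂ)) * a₀) * ω + b₀ = b₀ * (1 - ω / c) := by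
    rw [hcdef]; field_simp [hb₀]; ring
  have k2 : b₂ * ((q : ℂ) * ω - a) * ((q : ℂ) * ω - b)
      = b₀ * ((1 - (q : ℂ) * ω / a) * (1 - (q : ℂ) * ω / b)) := by
    rw [hba]; field_simp; ring
  rw [hϱ ω, hϱ ((q : ℂ) * ω), hCroot ω, hBroots ((q : ℂ) * ω), e1, e2, e3,
    show ((q : ℂ) * ω) / c = (q : ℂ) * ω / c from rfl, k1, k2]
  set P1 := qPoch q ((q : ℂ) * ((q : ℂ) * ω) / a) with hP1
  set P2 := qPoch q ((q : ℂ) * ((q : ℂ) * ω) / b) with hP2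
  set Pc := qPoch q ((q : ℂ) * ω / c) with hPcd
  set d1 := 1 - (q : ℂ) * ω / a with hd1
  set d2 := 1 - (q : ℂ) * ω / b with hd2
  set d3 := 1 - ω / c with hd3
  field_simp
end

section
/- Let 0 < q < 1 and let A(ω) = a₁ω + a₀, B(ω) = b₂ω² + b₁ω be real polynomials with b₀ = 0, b₁ ≠ 0, b₂ ≠ 0, b₁ − (1−q)a₀ = 0, b₂ − (1−q)a₁ ≠ 0, and suppose q·b₁/(b₂ − (1−q)a₁) > 0. Let a = −b₁/b₂ ≠ 0 be the nonzero root of B, and let r ∈ ℝ be defined by q^{−r} = q·b₁/(b₂ − (1−q)a₁). Then the function ϱ(ω) := ω^r · (qω/a; q)_∞ / ((−ω; q)_∞ · (−q·ω^{−1}; q)_∞), defined for real ω > 0, satisfies ϱ(ω)·(B(ω) − (1−q)ω·A(ω)) = B(qω)·ϱ(qω) for all ω > 0. -/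
/-- The infinite q-Pochhammer symbol `(x; q)_∞ = ∏_{k=0}^∞ (1 − qᵏx)` over `ℝ`. -/
noncomputable def qPochR (q x : ℝ) : ℝ :=
  ∏' k : ℕ, (1 - q ^ k * x)

lemma abs_log_one_sub_le {t : ℝ} (ht : |t| ≤ 1/2) : |Real.log (1 - t)| ≤ 2 * |t| := by
  have h1 : (0:ℝ) < 1 - t := by
    have := abs_le.1 ht
    linarith [this.1, this.2]
  rw [abs_le]
  constructor
  · have hlow := Real.one_sub_inv_le_log_of_pos h1
    have hinv : (1 - t) * (1 - t)⁻¹ = 1 := mul_inv_cancel₀ (ne_of_gt h1)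
    have hb := abs_le.1 ht
    nlinarith [abs_nonneg t, le_abs_self t, neg_abs_le t, inv_nonneg.2 h1.le]
  · have := Real.log_le_sub_one_of_pos h1
    linarith [neg_le_abs t, abs_nonneg t]

lemma summable_log_qPoch (q y : ℝ) (hq0 : 0 < q) (hq1 : q < 1) :
    Summable (fun n : ℕ => Real.log (1 - q ^ n * y)) := by
  have htend : Filter.Tendsto (fun n : ℕ => q ^ n * |y|) Filter.atTop (nhds 0) := by
    simpa using (tendsto_pow_atTop_nhds_zero_of_lt_one hq0.le hq1).mul_const |y|
  have hev : ∀ᶠ n in Filter.atTop, q ^ n * |y| ≤ 1/2 :=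
    htend.eventually (eventually_le_nhds (by norm_num))
  obtain ⟨N, hN⟩ := Filter.eventually_atTop.1 hev
  rw [← summable_nat_add_iff N]
  have hs : Summable (fun n : ℕ => 2 * (q ^ (n + N) * |y|)) := by
    have h := (summable_geometric_of_lt_one hq0.le hq1).mul_left (2 * (q ^ N * |y|))
    exact h.congr (fun n => by rw [pow_add]; ring)
  apply Summable.of_norm_bounded hs
  intro n
  have habs : |q ^ (n + N) * y| = q ^ (n + N) * |y| := by
    rw [abs_mul, abs_of_pos (pow_pos hq0 _)]
  have hle : |q ^ (n + N) * y| ≤ 1/2 := by rw [habs]; exact hN _ (Nat.le_add_left N n)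
  have := abs_log_one_sub_le hle
  rwa [Real.norm_eq_abs, ← habs]

lemma multipliable_qPoch (q y : ℝ) (hq0 : 0 < q) (hq1 : q < 1) :
    Multipliable (fun n : ℕ => 1 - q ^ n * y) := by
  have htend : Filter.Tendsto (fun n : ℕ => q ^ n * |y|) Filter.atTop (nhds 0) := by
    simpa using (tendsto_pow_atTop_nhds_zero_of_lt_one hq0.le hq1).mul_const |y|
  have hev : ∀ᶠ n in Filter.atTop, q ^ n * |y| ≤ 1/2 :=
    htend.eventually (eventually_le_nhds (by norm_num))
  obtain ⟨N, hN⟩ := Filter.eventually_atTop.1 hev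
  set s : Set ℕ := ↑(Finset.range N) with hs
  have hfin : Multipliable ((fun n : ℕ => 1 - q ^ n * y) ∘ ((↑) : s → ℕ)) :=
    ⟨_, hasProd_fintype _⟩
  have hcompl : Multipliable ((fun n : ℕ => 1 - q ^ n * y) ∘ ((↑) : ↥sᶜ → ℕ)) := by
    have hpos : ∀ (_ : Unit) (n : ↥sᶜ), 0 < 1 - q ^ (n : ℕ) * y := by
      intro _ n
      have hn : N ≤ (n : ℕ) := by
        have := n.2
        simp only [hs, Set.mem_compl_iff, Finset.coe_range, Set.mem_Iio, not_lt] at this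
        exact this
      have h2 := hN _ hn
      have h3 : q ^ (n : ℕ) * y ≤ |q ^ (n : ℕ) * y| := le_abs_self _
      have h4 : |q ^ (n : ℕ) * y| = q ^ (n : ℕ) * |y| := by
        rw [abs_mul, abs_of_pos (pow_pos hq0 _)]
      linarith
    exact Real.multipliable_of_summable_log (fun n => hpos () n)
      ((summable_log_qPoch q y hq0 hq1).subtype _)
  exact hfin.mul_compl hcompl

lemma qPochR_pos (q y : ℝ) (hq0 : 0 < q) (hq1 : q < 1) (hy : y ≤ 0) :
    0 < qPochR q y := by
  have hpos : ∀ (_ : Unit) (n : ℕ), 0 < 1 - q ^ n * y := by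
    intro _ n
    have : q ^ n * y ≤ 0 := mul_nonpos_of_nonneg_of_nonpos (pow_pos hq0 n).le hy
    linarith
  have h := Real.rexp_tsum_eq_tprod (f := fun (n : ℕ) => 1 - q ^ n * y)
    (hpos ()) (summable_log_qPoch q y hq0 hq1)
  unfold qPochR
  rw [← h]
  exact Real.exp_pos _

set_option maxHeartbeats 1000000 in
lemma qPochR_rec (q x : ℝ) (hq0 : 0 < q) (hq1 : q < 1) :
    qPochR q x = (1 - x) * qPochR q (q * x) := by
  unfold qPochR
  have hm : Multipliable (fun n : ℕ => 1 - q ^ (n + 1) * x) :=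
    (multipliable_qPoch q (q * x) hq0 hq1).congr (fun n => by rw [pow_succ]; ring)
  rw [tprod_eq_zero_mul' hm]
  congr 1
  · simp
  · exact tprod_congr (fun n => by rw [pow_succ]; ring)

/-- Let `0 < q < 1` and `A(ω) = a₁ω + a₀`, `B(ω) = b₂ω² + b₁ω` with
`b₁ ≠ 0`, `b₂ ≠ 0`, `b₁ − (1−q)a₀ = 0`, `b₂ − (1−q)a₁ ≠ 0`, and
`q·b₁/(b₂−(1−q)a₁) > 0`.  Let `a = −b₁/b₂` be the nonzero root of `B` and let `r`
satisfy `q^{−r} = q·b₁/(b₂−(1−q)a₁)`.  Then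
`ϱ(ω) = ω^r·(qω/a;q)_∞/((−ω;q)_∞·(−q·ω⁻¹;q)_∞)` satisfies
`ϱ(ω)(B(ω) − (1−q)ωA(ω)) = B(qω)ϱ(qω)` for all `ω > 0`. -/
theorem stmt_10 (q a₀ a₁ b₁ b₂ a r : ℝ) (hq0 : 0 < q) (hq1 : q < 1)
    (A B : ℝ → ℝ)
    (hA : ∀ ω : ℝ, A ω = a₁ * ω + a₀)
    (hB : ∀ ω : ℝ, B ω = b₂ * ω ^ 2 + b₁ * ω)
    (hb₁ : b₁ ≠ 0) (hb₂ : b₂ ≠ 0)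
    (hlin : b₁ - (1 - q) * a₀ = 0) (hlead : b₂ - (1 - q) * a₁ ≠ 0)
    (hpos : 0 < q * b₁ / (b₂ - (1 - q) * a₁))
    (ha : a = -b₁ / b₂) (ha0 : a ≠ 0)
    (hr : q ^ (-r) = q * b₁ / (b₂ - (1 - q) * a₁))
    (ϱ : ℝ → ℝ)
    (hϱ : ∀ ω : ℝ, 0 < ω →
      ϱ ω = ω ^ r * qPochR q (q * ω / a) / (qPochR q (-ω) * qPochR q (-q * ω⁻¹))) :
    ∀ ω : ℝ, 0 < ω → ϱ ω * (B ω - (1 - q) * ω * A ω) = B (q * ω) * ϱ (q * ω) := by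
  intro ω hω
  have hqω : 0 < q * ω := mul_pos hq0 hω
  have hq1' : (1:ℝ) - q ≠ 0 := by linarith
  have hqr : (0:ℝ) < q ^ r := Real.rpow_pos_of_pos hq0 r
  -- the key exponent identity
  have hc : b₂ - (1 - q) * a₁ = q * b₁ * q ^ r := by
    have h0 : q ^ (-r) * q ^ r = 1 := by
      rw [← Real.rpow_add hq0]; simp
    have h1 : (b₂ - (1 - q) * a₁) * q ^ (-r) = q * b₁ := by
      rw [hr]; field_simp
    calc b₂ - (1 - q) * a₁ = ((b₂ - (1 - q) * a₁) * q ^ (-r)) * q ^ r := by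
          rw [mul_assoc, h0, mul_one]
      _ = q * b₁ * q ^ r := by rw [h1]
  have ha₀ : a₀ = b₁ / (1 - q) := by field_simp; linarith
  have ha₁ : a₁ = (b₂ - q * b₁ * q ^ r) / (1 - q) := by field_simp; linarith
  -- Pochhammer recurrences
  have hP1 : qPochR q (q * ω / a) = (1 - q * ω / a) * qPochR q (q * (q * ω) / a) := by
    rw [qPochR_rec q (q * ω / a) hq0 hq1, show q * (q * ω / a) = q * (q * ω) / a from by ring]
  have hP2 : qPochR q (-ω) = (1 + ω) * qPochR q (-(q * ω)) := by
    rw [qPochR_rec q (-ω) hq0 hq1, show (1 : ℝ) - -ω = 1 + ω from by ring,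
      show q * -ω = -(q * ω) from by ring]
  have hP3 : qPochR q (-ω⁻¹) = (1 + ω⁻¹) * qPochR q (-q * ω⁻¹) := by
    rw [qPochR_rec q (-ω⁻¹) hq0 hq1, show (1 : ℝ) - -ω⁻¹ = 1 + ω⁻¹ from by ring,
      show q * -ω⁻¹ = -q * ω⁻¹ from by ring]
  have e1 : -q * (q * ω)⁻¹ = -ω⁻¹ := by
    field_simp
  have hD1 : 0 < qPochR q (-(q * ω)) := qPochR_pos q _ hq0 hq1 (by linarith)
  have hD2 : 0 < qPochR q (-q * ω⁻¹) := by
    apply qPochR_pos q _ hq0 hq1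
    have : 0 < ω⁻¹ := inv_pos.2 hω
    nlinarith
  have h1ω : (0:ℝ) < 1 + ω := by linarith
  have h1ωi : (0:ℝ) < 1 + ω⁻¹ := by positivity
  have hrpow : (q * ω) ^ r = q ^ r * ω ^ r := Real.mul_rpow hq0.le hω.le
  have hBA : B ω - (1 - q) * ω * A ω = q * b₁ * q ^ r * ω ^ 2 := by
    rw [hB, hA]; linear_combination ω ^ 2 * hc + ω * hlin
  have hBq : B (q * ω) = q * ω * b₁ * (1 - q * ω / a) := by
    rw [hB, ha]; field_simp [hb₁]; ring
  rw [hϱ ω hω, hϱ (q * ω) hqω, e1, hP1, hP2, hP3, hrpow, hBA, hBq]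
  field_simp [hD1.ne', hD2.ne', h1ω.ne', h1ωi.ne', hω.ne', hq0.ne', hqr.ne']
  ring
end
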